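/- Main approximation theorem: under the setting of two finite MDPs with common state and action spaces, drift condition ∑_{s'} w(s')P(s'|s,a) ≤ κ w(s) (for both P and P̂) with γκ < 1, let π̂⋆ be an optimal deterministic policy of the approximate model with V̂⋆ = V̂^{π̂⋆}, let V^{π̂⋆} be the value of π̂⋆ in the true model, and let V⋆ be the true optimal value. Then ‖V^{π̂⋆} − V⋆‖_w ≤ (1/(1−γκ)) [ ‖T^{π̂⋆} V̂⋆ − T̂^{π̂⋆} V̂⋆‖_w + ‖T⋆ V̂⋆ − T̂⋆ V̂⋆‖_w ]. -/

import Mathlib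

lemma abs_ciInf_sub_ciInf {A : Type*} [Fintype A] [Nonempty A] (f g : A → ℝ) (M : ℝ)
    (h : ∀ a, |f a - g a| ≤ M) : |(⨅ a, f a) - ⨅ a, g a| ≤ M := by
  have key : ∀ (f g : A → ℝ), (∀ a, |f a - g a| ≤ M) → (⨅ a, f a) - (⨅ a, g a) ≤ M := by
    intro f g h
    obtain ⟨a0, ha0⟩ := Finite.exists_min g
    have hg : (⨅ a, g a) = g a0 :=
      le_antisymm (ciInf_le (Set.Finite.bddBelow (Set.finite_range g)) a0) (le_ciInf ha0)
    have : (⨅ a, f a) ≤ f a0 := ciInf_le (Set.Finite.bddBelow (Set.finite_range f)) a0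
    have := (abs_le.mp (h a0)).2
    linarith
  rw [abs_le]
  constructor
  · have := key g f (fun a => by rw [abs_sub_comm]; exact h a); linarith
  · exact key f g h

lemma sum_abs_bound {S : Type*} [Fintype S] (p w X : S → ℝ) (hp : ∀ s, 0 ≤ p s)
    (K κw : ℝ) (hK : 0 ≤ K) (hX : ∀ s, |X s| ≤ K * w s)
    (hd : ∑ s, w s * p s ≤ κw) : |∑ s, p s * X s| ≤ K * κw := by
  calc |∑ s, p s * X s| ≤ ∑ s, |p s * X s| := Finset.abs_sum_le_sum_abs _ _
    _ ≤ ∑ s, p s * (K * w s) := by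
        apply Finset.sum_le_sum
        intro s _
        rw [abs_mul, abs_of_nonneg (hp s)]
        exact mul_le_mul_of_nonneg_left (hX s) (hp s)
    _ = K * ∑ s, w s * p s := by rw [Finset.mul_sum]; apply Finset.sum_congr rfl; intros; ring
    _ ≤ K * κw := mul_le_mul_of_nonneg_left hd hK

theorem stmt6 (S A : Type*) [Fintype S] [Nonempty S] [Fintype A] [Nonempty A]
    (γ κ : ℝ) (hγ0 : 0 < γ) (hγ1 : γ < 1) (hκ : 0 < κ) (hγκ : γ * κ < 1)
    (w : S → ℝ) (hw : ∀ s, 1 ≤ w s)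
    (c ch : S → A → ℝ) (P Ph : S → A → S → ℝ)
    (hP0 : ∀ s a s', 0 ≤ P s a s') (hP1 : ∀ s a, ∑ s', P s a s' = 1)
    (hPh0 : ∀ s a s', 0 ≤ Ph s a s') (hPh1 : ∀ s a, ∑ s', Ph s a s' = 1)
    (hdrift : ∀ s a, ∑ s', w s' * P s a s' ≤ κ * w s)
    (hdrifth : ∀ s a, ∑ s', w s' * Ph s a s' ≤ κ * w s)
    (V Vh Vπh : S → ℝ) (πh : S → A)
    -- V⋆ is the true optimal value function
    (hV : ∀ s, V s = ⨅ a, (c s a + γ * ∑ s', P s a s' * V s'))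
    -- V̂⋆ is the approximate optimal value function
    (hVh : ∀ s, Vh s = ⨅ a, (ch s a + γ * ∑ s', Ph s a s' * Vh s'))
    -- π̂⋆ is greedy w.r.t. V̂⋆ in the approximate model: T̂^{π̂⋆} V̂⋆ = T̂⋆ V̂⋆
    (hgreedy : ∀ s, ch s (πh s) + γ * ∑ s', Ph s (πh s) s' * Vh s' =
      ⨅ a, (ch s a + γ * ∑ s', Ph s a s' * Vh s'))
    -- V^{π̂⋆} is the value of π̂⋆ in the true model
    (hVπh : ∀ s, Vπh s = c s (πh s) + γ * ∑ s', P s (πh s) s' * Vπh s') :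
    (⨆ s, |Vπh s - V s| / w s) ≤ (1 / (1 - γ * κ)) *
      ((⨆ s, |(c s (πh s) + γ * ∑ s', P s (πh s) s' * Vh s') -
              (ch s (πh s) + γ * ∑ s', Ph s (πh s) s' * Vh s')| / w s) +
       (⨆ s, |(⨅ a, (c s a + γ * ∑ s', P s a s' * Vh s')) -
              (⨅ a, (ch s a + γ * ∑ s', Ph s a s' * Vh s'))| / w s)) := by
  have hw0 : ∀ s, 0 < w s := fun s => lt_of_lt_of_le one_pos (hw s)
  have h1γκ : 0 < 1 - γ * κ := by linarith
  -- generic facts about the weighted sup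
  have key : ∀ (f : S → ℝ) (s : S), |f s| ≤ (⨆ t, |f t| / w t) * w s := by
    intro f s
    rw [← div_le_iff₀ (hw0 s)]
    exact le_ciSup (f := fun t => |f t| / w t) (Set.Finite.bddAbove (Set.finite_range _)) s
  have nonneg : ∀ f : S → ℝ, 0 ≤ ⨆ t, |f t| / w t := by
    intro f
    have s0 := Classical.arbitrary S
    have h0 : (0:ℝ) ≤ |f s0| / w s0 := div_nonneg (abs_nonneg _) (hw0 s0).le
    exact h0.trans (le_ciSup (f := fun t => |f t| / w t) (Set.Finite.bddAbove (Set.finite_range _)) s0)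
  set ε1 := ⨆ s, |(c s (πh s) + γ * ∑ s', P s (πh s) s' * Vh s') -
              (ch s (πh s) + γ * ∑ s', Ph s (πh s) s' * Vh s')| / w s with hε1
  set ε2 := ⨆ s, |(⨅ a, (c s a + γ * ∑ s', P s a s' * Vh s')) -
              (⨅ a, (ch s a + γ * ∑ s', Ph s a s' * Vh s'))| / w s with hε2
  set D1 := ⨆ s, |Vπh s - Vh s| / w s with hD1def
  set D2 := ⨆ s, |Vh s - V s| / w s with hD2def
  have hVh' : ∀ s, Vh s = ch s (πh s) + γ * ∑ s', Ph s (πh s) s' * Vh s' :=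
    fun s => (hVh s).trans (hgreedy s).symm
  -- Step A : D1 ≤ ε1 + γκ D1
  have hA : D1 ≤ ε1 + γ * κ * D1 := by
    rw [hD1def]
    apply ciSup_le
    intro s
    rw [div_le_iff₀ (hw0 s)]
    have hsplit : ∑ s', P s (πh s) s' * (Vπh s' - Vh s')
        = ∑ s', P s (πh s) s' * Vπh s' - ∑ s', P s (πh s) s' * Vh s' := by
      rw [← Finset.sum_sub_distrib]; apply Finset.sum_congr rfl; intros; ring
    have heq : Vπh s - Vh s =
        ((c s (πh s) + γ * ∑ s', P s (πh s) s' * Vh s') -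
         (ch s (πh s) + γ * ∑ s', Ph s (πh s) s' * Vh s'))
        + γ * ∑ s', P s (πh s) s' * (Vπh s' - Vh s') := by
      rw [hsplit]
      nth_rewrite 1 [hVπh s]
      nth_rewrite 1 [hVh' s]
      ring
    have h1 : |(c s (πh s) + γ * ∑ s', P s (πh s) s' * Vh s') -
         (ch s (πh s) + γ * ∑ s', Ph s (πh s) s' * Vh s')| ≤ ε1 * w s :=
      key (fun t => (c t (πh t) + γ * ∑ s', P t (πh t) s' * Vh s') -
         (ch t (πh t) + γ * ∑ s', Ph t (πh t) s' * Vh s')) s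
    have h2 : |∑ s', P s (πh s) s' * (Vπh s' - Vh s')| ≤ D1 * (κ * w s) := by
      apply sum_abs_bound _ w _ (hP0 s (πh s)) D1 (κ * w s)
        (nonneg _) (fun t => key (fun u => Vπh u - Vh u) t) (hdrift s (πh s))
    calc |Vπh s - Vh s| ≤ ε1 * w s + γ * (D1 * (κ * w s)) := by
          rw [heq]
          refine (abs_add_le _ _).trans (add_le_add h1 ?_)
          rw [abs_mul, abs_of_pos hγ0]
          exact mul_le_mul_of_nonneg_left h2 hγ0.le
      _ = (ε1 + γ * κ * D1) * w s := by ring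
  -- Step B : D2 ≤ ε2 + γκ D2
  have hB : D2 ≤ ε2 + γ * κ * D2 := by
    rw [hD2def]
    apply ciSup_le
    intro s
    rw [div_le_iff₀ (hw0 s)]
    have h1 : |(⨅ a, (c s a + γ * ∑ s', P s a s' * Vh s')) -
        (⨅ a, (ch s a + γ * ∑ s', Ph s a s' * Vh s'))| ≤ ε2 * w s :=
      key (fun t => (⨅ a, (c t a + γ * ∑ s', P t a s' * Vh s')) -
        (⨅ a, (ch t a + γ * ∑ s', Ph t a s' * Vh s'))) s
    have h2 : |(⨅ a, (c s a + γ * ∑ s', P s a s' * V s')) -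
        (⨅ a, (c s a + γ * ∑ s', P s a s' * Vh s'))| ≤ γ * (D2 * (κ * w s)) := by
      apply abs_ciInf_sub_ciInf
      intro a
      have hsplit : ∑ s', P s a s' * (V s' - Vh s')
          = ∑ s', P s a s' * V s' - ∑ s', P s a s' * Vh s' := by
        rw [← Finset.sum_sub_distrib]; apply Finset.sum_congr rfl; intros; ring
      have : (c s a + γ * ∑ s', P s a s' * V s') - (c s a + γ * ∑ s', P s a s' * Vh s')
          = γ * ∑ s', P s a s' * (V s' - Vh s') := by rw [hsplit]; ring
      rw [this, abs_mul, abs_of_pos hγ0]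
      refine mul_le_mul_of_nonneg_left ?_ hγ0.le
      apply sum_abs_bound _ w _ (hP0 s a) D2 (κ * w s) (nonneg _)
        (fun t => by rw [abs_sub_comm]; exact key (fun u => Vh u - V u) t) (hdrift s a)
    calc |Vh s - V s| ≤ ε2 * w s + γ * (D2 * (κ * w s)) := by
          rw [hVh s, hV s]
          rw [show (⨅ a, (ch s a + γ * ∑ s', Ph s a s' * Vh s')) -
              (⨅ a, (c s a + γ * ∑ s', P s a s' * V s')) =
              -(((⨅ a, (c s a + γ * ∑ s', P s a s' * Vh s')) -
                (⨅ a, (ch s a + γ * ∑ s', Ph s a s' * Vh s'))) +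
               ((⨅ a, (c s a + γ * ∑ s', P s a s' * V s')) -
                (⨅ a, (c s a + γ * ∑ s', P s a s' * Vh s')))) by ring, abs_neg]
          exact (abs_add_le _ _).trans (add_le_add h1 h2)
      _ = (ε2 + γ * κ * D2) * w s := by ring
  -- combine
  have hD1 : D1 ≤ ε1 / (1 - γ * κ) := by
    rw [le_div_iff₀ h1γκ]; nlinarith [nonneg (fun s => Vπh s - Vh s)]
  have hD2 : D2 ≤ ε2 / (1 - γ * κ) := by
    rw [le_div_iff₀ h1γκ]; nlinarith [nonneg (fun s => Vh s - V s)]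
  have htri : (⨆ s, |Vπh s - V s| / w s) ≤ D1 + D2 := by
    apply ciSup_le
    intro s
    have : |Vπh s - V s| / w s ≤ |Vπh s - Vh s| / w s + |Vh s - V s| / w s := by
      rw [← add_div, div_le_div_iff_of_pos_right (hw0 s)]
      exact (abs_sub_le _ _ _)
    refine this.trans (add_le_add ?_ ?_)
    · exact le_ciSup (f := fun t => |Vπh t - Vh t| / w t) (Set.Finite.bddAbove (Set.finite_range _)) s
    · exact le_ciSup (f := fun t => |Vh t - V t| / w t) (Set.Finite.bddAbove (Set.finite_range _)) s
  calc (⨆ s, |Vπh s - V s| / w s) ≤ D1 + D2 := htri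
    _ ≤ ε1 / (1 - γ * κ) + ε2 / (1 - γ * κ) := add_le_add hD1 hD2
    _ = (1 / (1 - γ * κ)) * (ε1 + ε2) := by field_simp
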